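/- Let D be a C*-algebra, {Iₙ}ₙ∈ℕ an increasing family of closed two-sided ideals of D, and B a C*-subalgebra of D. Then B ∩ (closure of ⋃ₙ Iₙ) equals the closure of ⋃ₙ (B ∩ Iₙ). -/

import Mathlib

noncomputable section

/-- A (right) Hilbert C*-module over a C*-algebra `A`. -/
class HilbertModule (A : Type*) [CStarAlgebra A] (X : Type*)
    [NormedAddCommGroup X] [NormedSpace ℂ X] : Type _ where
  rsmul : X → A → X
  inner : X → X → A
  rsmul_add_left : ∀ (x y : X) (a : A), rsmul (x + y) a = rsmul x a + rsmul y a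
  rsmul_add_right : ∀ (x : X) (a b : A), rsmul x (a + b) = rsmul x a + rsmul x b
  rsmul_rsmul : ∀ (x : X) (a b : A), rsmul (rsmul x a) b = rsmul x (a * b)
  rsmul_csmul_left : ∀ (c : ℂ) (x : X) (a : A), rsmul (c • x) a = c • rsmul x a
  rsmul_csmul_right : ∀ (c : ℂ) (x : X) (a : A), rsmul x (c • a) = c • rsmul x a
  inner_add_left : ∀ (x y z : X), inner (x + y) z = inner x z + inner y z
  inner_add_right : ∀ (x y z : X), inner x (y + z) = inner x y + inner x z
  inner_csmul_right : ∀ (c : ℂ) (x y : X), inner x (c • y) = c • inner x y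
  star_inner : ∀ (x y : X), star (inner x y) = inner y x
  inner_rsmul_right : ∀ (x y : X) (a : A), inner x (rsmul y a) = inner x y * a
  inner_self_isPositive : ∀ x : X, ∃ b : A, inner x x = star b * b
  norm_sq_inner : ∀ x : X, ‖x‖ ^ 2 = ‖inner x x‖
  norm_inner_le : ∀ x y : X, ‖inner x y‖ ≤ ‖x‖ * ‖y‖
  norm_rsmul_le : ∀ (x : X) (a : A), ‖rsmul x a‖ ≤ ‖x‖ * ‖a‖

namespace HilbertModule

variable {A : Type*} [CStarAlgebra A] {X : Type*}
  [NormedAddCommGroup X] [NormedSpace ℂ X] [HilbertModule A X]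

/-- The closed submodule `X·S` generated by products `ξ·a`, `a ∈ S`. -/
def idealSub (X : Type*) {A : Type*} [CStarAlgebra A] [NormedAddCommGroup X]
    [NormedSpace ℂ X] [HilbertModule A X] (S : Set A) : Set X :=
  closure (Submodule.span ℂ {x : X | ∃ (ξ : X) (a : A), a ∈ S ∧ x = rsmul ξ a} : Set X)

/-- The rank-one ("theta") operator `ζ ↦ ξ⟨η,ζ⟩`. -/
def rankOne (A : Type*) {X : Type*} [CStarAlgebra A] [NormedAddCommGroup X]
    [NormedSpace ℂ X] [HilbertModule A X] (ξ η : X) : X →L[ℂ] X :=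
  LinearMap.mkContinuous
    { toFun := fun ζ => rsmul ξ (inner (A := A) η ζ)
      map_add' := fun x y => by
        show rsmul ξ (inner (A := A) η (x + y)) = _
        rw [inner_add_right, rsmul_add_right]
      map_smul' := fun c x => by
        show rsmul ξ (inner (A := A) η (c • x)) = _
        simp only [RingHom.id_apply]
        rw [inner_csmul_right, rsmul_csmul_right] }
    (‖ξ‖ * ‖η‖)
    (fun ζ => by
      calc ‖rsmul ξ (inner (A := A) η ζ)‖ ≤ ‖ξ‖ * ‖inner (A := A) η ζ‖ :=
            norm_rsmul_le _ _
        _ ≤ ‖ξ‖ * (‖η‖ * ‖ζ‖) :=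
            mul_le_mul_of_nonneg_left (norm_inner_le _ _) (norm_nonneg _)
        _ = ‖ξ‖ * ‖η‖ * ‖ζ‖ := (mul_assoc _ _ _).symm)

/-- The set of "compact" operators `K(X)`: the closed linear span of rank-one operators. -/
def compacts (A X : Type*) [CStarAlgebra A] [NormedAddCommGroup X]
    [NormedSpace ℂ X] [HilbertModule A X] : Set (X →L[ℂ] X) :=
  closure (Submodule.span ℂ {T : X →L[ℂ] X | ∃ ξ η : X, T = rankOne A ξ η} : Set (X →L[ℂ] X))

/-- `K(X·I)`, viewed inside the operators on `X`: the closed span of rank-one operators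
with both legs in the subset `S`. -/
def compactsOn (A : Type*) {X : Type*} [CStarAlgebra A] [NormedAddCommGroup X]
    [NormedSpace ℂ X] [HilbertModule A X] (S : Set X) : Set (X →L[ℂ] X) :=
  closure (Submodule.span ℂ
    {T : X →L[ℂ] X | ∃ ξ ∈ S, ∃ η ∈ S, T = rankOne A ξ η} : Set (X →L[ℂ] X))

/-- An operator is adjointable if it has an adjoint with respect to the `A`-valued
inner product. -/
def IsAdjointable (A : Type*) {X : Type*} [CStarAlgebra A] [NormedAddCommGroup X]
    [NormedSpace ℂ X] [HilbertModule A X] (S : X →L[ℂ] X) : Prop :=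
  ∃ T : X →L[ℂ] X, ∀ x y : X, inner (A := A) (S x) y = inner (A := A) x (T y)

end HilbertModule

/-- A C*-correspondence over `A`: a Hilbert `A`-module with a left action of `A`
by adjointable operators. -/
class Correspondence (A : Type*) [CStarAlgebra A] (X : Type*)
    [NormedAddCommGroup X] [NormedSpace ℂ X] extends HilbertModule A X where
  lsmul : A → X → X
  lsmul_add_left : ∀ (a b : A) (x : X), lsmul (a + b) x = lsmul a x + lsmul b x
  lsmul_add_right : ∀ (a : A) (x y : X), lsmul a (x + y) = lsmul a x + lsmul a y
  lsmul_mul : ∀ (a b : A) (x : X), lsmul (a * b) x = lsmul a (lsmul b x)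
  lsmul_csmul_left : ∀ (c : ℂ) (a : A) (x : X), lsmul (c • a) x = c • lsmul a x
  lsmul_csmul_right : ∀ (c : ℂ) (a : A) (x : X), lsmul a (c • x) = c • lsmul a x
  inner_lsmul_left : ∀ (a : A) (x y : X), inner (lsmul a x) y = inner x (lsmul (star a) y)
  lsmul_rsmul : ∀ (a : A) (x : X) (b : A), lsmul a (rsmul x b) = rsmul (lsmul a x) b
  norm_lsmul_le : ∀ (a : A) (x : X), ‖lsmul a x‖ ≤ ‖a‖ * ‖x‖

namespace Correspondence

open HilbertModule

variable {A : Type*} [CStarAlgebra A] {X : Type*}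
  [NormedAddCommGroup X] [NormedSpace ℂ X] [Correspondence A X]

/-- The left action `φ_X(a)` as a continuous linear operator on `X`. -/
def lact (A : Type*) {X : Type*} [CStarAlgebra A] [NormedAddCommGroup X]
    [NormedSpace ℂ X] [Correspondence A X] (a : A) : X →L[ℂ] X :=
  LinearMap.mkContinuous
    { toFun := lsmul a
      map_add' := lsmul_add_right a
      map_smul' := fun c x => by
        show lsmul a (c • x) = _
        simp only [RingHom.id_apply]; rw [lsmul_csmul_right] }
    ‖a‖ (norm_lsmul_le a)

/-- The ideal `X(S)`: closed span of `{⟨η, φ_X(a)ξ⟩ : a ∈ S}`. -/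
def corrApply (X : Type*) {A : Type*} [CStarAlgebra A] [NormedAddCommGroup X]
    [NormedSpace ℂ X] [Correspondence A X] (S : Set A) : Set A :=
  closure (Submodule.span ℂ
    {b : A | ∃ a ∈ S, ∃ ξ η : X, b = inner (A := A) η (lsmul a ξ)} : Set A)

/-- The ideal `X⁻¹(S) = {a : ⟨η, φ_X(a)ξ⟩ ∈ S for all ξ, η}`. -/
def corrInv (X : Type*) {A : Type*} [CStarAlgebra A] [NormedAddCommGroup X]
    [NormedSpace ℂ X] [Correspondence A X] (S : Set A) : Set A :=
  {a : A | ∀ ξ η : X, inner (A := A) η (lsmul a ξ) ∈ S}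

/-- The kernel of the left action `φ_X`. -/
def kerLact (X : Type*) {A : Type*} [CStarAlgebra A] [NormedAddCommGroup X]
    [NormedSpace ℂ X] [Correspondence A X] : Set A :=
  {a : A | ∀ ξ : X, lsmul a ξ = 0}

/-- Katsura's ideal `J_X = φ_X⁻¹(K(X)) ∩ (ker φ_X)^⊥`. -/
def JX (X : Type*) {A : Type*} [CStarAlgebra A] [NormedAddCommGroup X]
    [NormedSpace ℂ X] [Correspondence A X] : Set A :=
  {a : A | lact A (X := X) a ∈ compacts A X ∧ ∀ b ∈ kerLact X, a * b = 0}

end Correspondence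

open HilbertModule Correspondence

/-- Data presenting a Hilbert `B`-module `Y` as the quotient `X_I = X/XI` of a Hilbert
`A`-module `X` by a closed two-sided ideal `I` of `A` (with `B` playing the role of `A/I`). -/
structure QuotientData (A B : Type*) [CStarAlgebra A] [CStarAlgebra B]
    (I : TwoSidedIdeal A)
    (X Y : Type*) [NormedAddCommGroup X] [NormedSpace ℂ X] [HilbertModule A X]
    [NormedAddCommGroup Y] [NormedSpace ℂ Y] [HilbertModule B Y] : Type _ where
  π : A →⋆ₐ[ℂ] B
  π_surjective : Function.Surjective π
  π_ker : ∀ a : A, π a = 0 ↔ a ∈ I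
  q : X →ₗ[ℂ] Y
  q_surjective : Function.Surjective q
  q_ker : ∀ ξ : X, q ξ = 0 ↔ ξ ∈ idealSub X (I : Set A)
  q_inner : ∀ ξ ζ : X, inner (A := B) (q ξ) (q ζ) = π (inner (A := A) ξ ζ)
  q_rsmul : ∀ (ξ : X) (a : A), q (rsmul ξ a) = rsmul (q ξ) (π a)


/-- Quotient data compatible with the left actions (presenting `X_I` as a
C*-correspondence over `A/I`). -/
structure CorrQuotientData (A B : Type*) [CStarAlgebra A] [CStarAlgebra B]
    (I : TwoSidedIdeal A)
    (X Y : Type*) [NormedAddCommGroup X] [NormedSpace ℂ X] [Correspondence A X]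
    [NormedAddCommGroup Y] [NormedSpace ℂ Y] [Correspondence B Y]
    extends QuotientData A B I X Y where
  q_lsmul : ∀ (a : A) (ξ : X), q (lsmul a ξ) = lsmul (π a) (q ξ)

/-- Katsura's ideal `J(I) = {a : [φ_X(a)]_I ∈ K(X_I), a·X⁻¹(I) ⊂ I}`, expressed via
quotient data presenting `X_I`. -/
def JofI {A B : Type*} [CStarAlgebra A] [CStarAlgebra B] {I : TwoSidedIdeal A}
    {X Y : Type*} [NormedAddCommGroup X] [NormedSpace ℂ X] [Correspondence A X]
    [NormedAddCommGroup Y] [NormedSpace ℂ Y] [HilbertModule B Y]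
    (D : QuotientData A B I X Y) : Set A :=
  {a : A | (∃ T ∈ compacts B Y, ∀ ξ : X, T (D.q ξ) = D.q (lsmul a ξ)) ∧
    ∀ b ∈ corrInv X (I : Set A), a * b ∈ I}

/-- A Hilbert `A`-bimodule: a C*-correspondence together with a left inner product
satisfying `φ_X(⟪ξ,η⟫) = θ_{ξ,η}`. -/
class HilbertBimodule (A : Type*) [CStarAlgebra A] (X : Type*)
    [NormedAddCommGroup X] [NormedSpace ℂ X] extends Correspondence A X where
  linner : X → X → A
  lsmul_linner : ∀ ξ η ζ : X, lsmul (linner ξ η) ζ = rsmul ξ (inner η ζ)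

/-- The closed subspace `φ_X(S)X`: closed span of `{φ_X(a)ξ : a ∈ S}`. -/
def lsmulSet (X : Type*) {A : Type*} [CStarAlgebra A] [NormedAddCommGroup X]
    [NormedSpace ℂ X] [Correspondence A X] (S : Set A) : Set X :=
  closure (Submodule.span ℂ
    {x : X | ∃ a ∈ S, ∃ ξ : X, x = Correspondence.lsmul a ξ} : Set X)


section Stmt7Aux

open scoped NNReal

section Aux
variable {D : Type*} [CStarAlgebra D]

private lemma real_smul_eq_mul (r : ℝ) (x : D) : r • x = (r • (1 : D)) * x := by
  rw [smul_mul_assoc, one_mul]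

/-- The real non-unital star subalgebra attached to a two-sided ideal. -/
def idealAlg (I : TwoSidedIdeal D) : NonUnitalStarSubalgebra ℝ D where
  carrier := {x | x ∈ I ∧ star x ∈ I}
  add_mem' := fun hx hy => ⟨I.add_mem hx.1 hy.1, by rw [star_add]; exact I.add_mem hx.2 hy.2⟩
  zero_mem' := ⟨I.zero_mem, by rw [star_zero]; exact I.zero_mem⟩
  mul_mem' := fun {x y} hx hy => ⟨I.mul_mem_left _ _ hy.1, by
    rw [star_mul]; exact I.mul_mem_left _ _ hx.2⟩
  smul_mem' := fun r x hx => ⟨by rw [real_smul_eq_mul]; exact I.mul_mem_left _ _ hx.1, by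
    rw [star_smul, star_trivial, real_smul_eq_mul]; exact I.mul_mem_left _ _ hx.2⟩
  star_mem' := fun {x} hx => ⟨hx.2, by rw [star_star]; exact hx.1⟩

lemma mem_idealAlg {I : TwoSidedIdeal D} {x : D} :
    x ∈ idealAlg I ↔ x ∈ I ∧ star x ∈ I := Iff.rfl

lemma isClosed_idealAlg (I : TwoSidedIdeal D) (hI : IsClosed (I : Set D)) :
    IsClosed ((idealAlg I : NonUnitalStarSubalgebra ℝ D) : Set D) := by
  have : ((idealAlg I : NonUnitalStarSubalgebra ℝ D) : Set D)
      = (I : Set D) ∩ (star ⁻¹' (I : Set D)) := rfl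
  rw [this]
  exact hI.inter (hI.preimage continuous_star)

/-- The real non-unital star subalgebra attached to a complex one. -/
def realAlg (B : NonUnitalStarSubalgebra ℂ D) : NonUnitalStarSubalgebra ℝ D where
  carrier := (B : Set D)
  add_mem' := fun hx hy => add_mem hx hy
  zero_mem' := zero_mem B
  mul_mem' := fun hx hy => mul_mem hx hy
  smul_mem' := fun r x hx => by
    have : r • x = (r : ℂ) • x := (Complex.coe_smul r x).symm
    rw [this]
    exact SMulMemClass.smul_mem _ hx
  star_mem' := fun hx => star_mem hx

lemma mem_realAlg {B : NonUnitalStarSubalgebra ℂ D} {x : D} :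
    x ∈ realAlg B ↔ x ∈ B := Iff.rfl

/-- Membership of `cfcₙ f a` in closed real star subalgebras containing `a`. -/
lemma cfcn_mem_of_mem (S : NonUnitalStarSubalgebra ℝ D) (hS : IsClosed (S : Set D))
    {a : D} (ha : a ∈ S) (hsa : IsSelfAdjoint a) (f : ℝ → ℝ)
    (hf : ContinuousOn f (quasispectrum ℝ a)) (hf0 : f 0 = 0) :
    cfcₙ f a ∈ S := by
  have key : Set.range (cfcₙHom (R := ℝ) hsa) ⊆ (S : Set D) := by
    have hdense := ContinuousMapZero.adjoin_id_dense (quasispectrum ℝ a)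
    have h₁ := (cfcₙHom_isClosedEmbedding (R := ℝ) hsa).continuous.range_subset_closure_image_dense
      hdense
    refine h₁.trans ?_
    have himg : (cfcₙHom (R := ℝ) hsa) ''
        (NonUnitalStarAlgebra.adjoin ℝ {(ContinuousMapZero.id (quasispectrum ℝ a) : ContinuousMapZero (quasispectrum ℝ a) ℝ)} : Set _)
        ⊆ (S : Set D) := by
      have hmap := NonUnitalStarAlgHom.map_adjoin_singleton (cfcₙHom (R := ℝ) hsa)
        (ContinuousMapZero.id (quasispectrum ℝ a) : ContinuousMapZero (quasispectrum ℝ a) ℝ)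
      have : (cfcₙHom (R := ℝ) hsa) ''
          (NonUnitalStarAlgebra.adjoin ℝ {(ContinuousMapZero.id (quasispectrum ℝ a) : ContinuousMapZero (quasispectrum ℝ a) ℝ)} : Set _)
          = ((NonUnitalStarAlgebra.adjoin ℝ {a} : NonUnitalStarSubalgebra ℝ D) : Set D) := by
        have hid : (cfcₙHom (R := ℝ) hsa)
            (ContinuousMapZero.id (quasispectrum ℝ a) : ContinuousMapZero (quasispectrum ℝ a) ℝ) = a :=
          cfcₙHom_id hsa
        rw [← NonUnitalStarSubalgebra.coe_map, hmap, hid]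
      rw [this]
      exact NonUnitalStarAlgebra.adjoin_le (Set.singleton_subset_iff.mpr ha)
    calc closure ((cfcₙHom (R := ℝ) hsa) '' _) ⊆ closure (S : Set D) := closure_mono himg
      _ = (S : Set D) := hS.closure_eq
  rw [cfcₙ_apply f a hf hf0 hsa]
  exact key (Set.mem_range_self _)

end Aux

section Ord
variable {D : Type*} [CStarAlgebra D] [PartialOrder D] [StarOrderedRing D]

lemma smul_one_nonneg' {r : ℝ} (hr : 0 ≤ r) : 0 ≤ r • (1 : D) := by
  have h := star_mul_self_nonneg ((Real.sqrt r) • (1 : D))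
  rwa [star_smul, star_trivial, star_one, smul_mul_assoc, one_mul, smul_smul,
    Real.mul_self_sqrt hr] at h

lemma real_smul_nonneg {r : ℝ} (hr : 0 ≤ r) {x : D} (hx : 0 ≤ x) : 0 ≤ r • x := by
  have hsa : IsSelfAdjoint x := .of_nonneg hx
  have h1 : cfcₙ (fun t : ℝ => r * t) x = r • x := cfcₙ_const_mul_id r x
  rw [← h1]
  exact cfcₙ_nonneg fun t ht => mul_nonneg hr (quasispectrum_nonneg_of_nonneg x hx t ht)

lemma real_smul_le_smul {r : ℝ} (hr : 0 ≤ r) {x y : D} (h : x ≤ y) : r • x ≤ r • y := by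
  rw [← sub_nonneg, ← smul_sub]
  exact real_smul_nonneg hr (sub_nonneg.2 h)

/-- The key approximation lemma: if `q * star q` is dominated by a positive element of a
closed two-sided ideal, then `q` belongs to the ideal. -/
lemma mem_of_conj_le (I : TwoSidedIdeal D) (hI : IsClosed (I : Set D))
    {y : D} (hyI : y ∈ I) (hysa : star y = y) (hy0 : 0 ≤ y)
    {q : D} (hq : q * star q ≤ y) : q ∈ I := by
  have hyIA : y ∈ idealAlg I := ⟨hyI, hysa.symm ▸ hyI⟩
  have hsy : IsSelfAdjoint y := hysa
  suffices h : q ∈ closure (I : Set D) by rwa [hI.closure_eq] at h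
  rw [Metric.mem_closure_iff]
  intro ε hε
  set η : ℝ := ε ^ 2 / 2 with hηdef
  have hη0 : 0 < η := by positivity
  set f : ℝ → ℝ := fun t => (η⁻¹ * t ⊔ 0) ⊓ 1 with hfdef
  have hfc : Continuous f := (((continuous_const.mul continuous_id).max continuous_const).min
    continuous_const)
  have hf0 : f 0 = 0 := by simp [hfdef]
  have hf_mem : ∀ t, 0 ≤ f t ∧ f t ≤ 1 := fun t => ⟨le_min (le_max_right _ _) one_pos.le, min_le_right _ _⟩
  set e := cfcₙ f y with hedef
  have heI : e ∈ I := (cfcn_mem_of_mem (idealAlg I) (isClosed_idealAlg I hI) hyIA hsy f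
    hfc.continuousOn hf0).1
  have hesa : IsSelfAdjoint e := cfcₙ_predicate f y
  -- the function h
  set g : ℝ → ℝ := fun t => t - f t * t - t * f t + f t * (t * f t) with hgdef
  have hgc : Continuous g := by fun_prop
  -- expansion of (1 - e) * y * (1 - e)
  have hfc' : ContinuousOn f (quasispectrum ℝ y) := hfc.continuousOn
  have hidc : ContinuousOn (fun t : ℝ => t) (quasispectrum ℝ y) := continuousOn_id
  have hey : cfcₙ (fun t => f t * t) y = e * y := by
    rw [cfcₙ_mul f (fun t : ℝ => t) y hfc' hf0 hidc rfl, cfcₙ_id' ℝ y hsy]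
  have hye : cfcₙ (fun t => t * f t) y = y * e := by
    rw [cfcₙ_mul (fun t : ℝ => t) f y hidc rfl hfc' hf0, cfcₙ_id' ℝ y hsy]
  have heye : cfcₙ (fun t => f t * (t * f t)) y = e * (y * e) := by
    rw [cfcₙ_mul f (fun t => t * f t) y hfc' hf0 (by fun_prop) (by simp [hf0]), hye]
  have hconj : (1 - e) * y * (1 - e) = cfcₙ g y := by
    have hexp : (1 - e) * y * (1 - e) = y - e * y - y * e + e * (y * e) := by noncomm_ring
    have e1 : cfcₙ (fun t => t - f t * t) y = y - e * y := by
      rw [cfcₙ_sub (fun t : ℝ => t) (fun t => f t * t) y hidc rfl (by fun_prop) (by simp [hf0]),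
        cfcₙ_id' ℝ y hsy, hey]
    have e2 : cfcₙ (fun t => t - f t * t - t * f t) y = y - e * y - y * e := by
      rw [cfcₙ_sub (fun t => t - f t * t) (fun t => t * f t) y (by fun_prop) (by simp [hf0])
        (by fun_prop) (by simp [hf0]), e1, hye]
    have e3 : cfcₙ g y = y - e * y - y * e + e * (y * e) := by
      rw [hgdef, cfcₙ_add (fun t => t - f t * t - t * f t) (fun t => f t * (t * f t)) y
        (by fun_prop) (by simp [hf0]) (by fun_prop) (by simp [hf0]), e2, heye]
    rw [hexp, e3]
  -- norm bound on cfcₙ g y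
  have hgnorm : ‖cfcₙ g y‖ ≤ η := by
    refine norm_cfcₙ_le fun t ht => ?_
    have ht0 : 0 ≤ t := quasispectrum_nonneg_of_nonneg y hy0 t ht
    have hft := hf_mem t
    have hgt : g t = t * (1 - f t) ^ 2 := by rw [hgdef]; ring
    rcases le_or_gt t η with h | h
    · have h2 : (1 - f t) ^ 2 ≤ 1 := by nlinarith [hft.1, hft.2]
      have h3 : t * (1 - f t) ^ 2 ≤ t := by nlinarith [mul_le_mul_of_nonneg_left h2 ht0]
      rw [hgt, Real.norm_eq_abs, abs_of_nonneg (by positivity)]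
      linarith
    · have hf1 : f t = 1 := by
        have h1t : (1 : ℝ) ≤ η⁻¹ * t := by
          rw [inv_mul_eq_div]
          exact (one_le_div hη0).mpr h.le
        simp only [hfdef]
        rw [min_eq_right (le_trans h1t (le_max_left _ _))]
      rw [hgt, hf1]
      simp [hη0.le]
  -- the conjugation inequality
  have hsub : IsSelfAdjoint (1 - e) := (IsSelfAdjoint.one (R := D)).sub hesa
  have hcle := star_left_conjugate_le_conjugate hq (1 - e)
  rw [hsub.star_eq] at hcle
  have hlhs : (1 - e) * (q * star q) * (1 - e) = ((1 - e) * q) * star ((1 - e) * q) := by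
    rw [star_mul, hsub.star_eq]; noncomm_ring
  rw [hlhs, hconj] at hcle
  have hzz : (0 : D) ≤ ((1 - e) * q) * star ((1 - e) * q) := mul_star_self_nonneg _
  have hn1 : ‖((1 - e) * q) * star ((1 - e) * q)‖ ≤ η :=
    le_trans (CStarAlgebra.norm_le_norm_of_nonneg_of_le hzz hcle) hgnorm
  have hn2 : ‖(1 - e) * q‖ * ‖(1 - e) * q‖ ≤ η := by
    rwa [CStarRing.norm_self_mul_star] at hn1
  refine ⟨e * q, I.mul_mem_right e q heI, ?_⟩
  have h1eq : (1 - e) * q = q - e * q := by noncomm_ring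
  rw [dist_eq_norm, ← h1eq]
  rw [hηdef] at hn2
  nlinarith [norm_nonneg ((1 - e) * q)]

/-- Closed two-sided ideals in a C*-algebra are star-closed. -/
lemma star_mem_ideal (I : TwoSidedIdeal D) (hI : IsClosed (I : Set D))
    {x : D} (hx : x ∈ I) : star x ∈ I := by
  refine mem_of_conj_le I hI (y := star x * x) (I.mul_mem_left _ _ hx) ?_
    (star_mul_self_nonneg x) ?_
  · rw [star_mul, star_star]
  · rw [star_star]

end Ord

end Stmt7Aux

/-- for an increasing family of closed two-sided ideals `Iₙ` of a
C*-algebra `D` and a C*-subalgebra `B` of `D`,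
`B ∩ lim Iₙ = lim (B ∩ Iₙ)`. -/
theorem stmt7 {D : Type*} [CStarAlgebra D]
    (I : ℕ → TwoSidedIdeal D) (hmono : Monotone I)
    (hclosed : ∀ n, IsClosed ((I n : Set D)))
    (B : NonUnitalStarSubalgebra ℂ D) (hB : IsClosed (B : Set D)) :
    (B : Set D) ∩ closure (⋃ n, ((I n : Set D))) =
      closure (⋃ n, ((B : Set D) ∩ (I n : Set D))) := by
  letI : PartialOrder D := CStarAlgebra.spectralOrder D
  letI : StarOrderedRing D := CStarAlgebra.spectralOrderedRing D
  apply subset_antisymm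
  · rintro b ⟨hbB, hbJ⟩
    rw [Metric.mem_closure_iff]
    intro ε hε
    set δ : ℝ := ε ^ 2 / 6 with hδdef
    have hδ0 : 0 < δ := by positivity
    obtain ⟨x, hxU, hxd⟩ := Metric.mem_closure_iff.mp hbJ (δ / (‖b‖ + 1)) (by positivity)
    obtain ⟨n, hxn⟩ := Set.mem_iUnion.mp hxU
    set c := star b * b with hcdef
    have hcB : c ∈ B := mul_mem (star_mem hbB) hbB
    have hc0 : 0 ≤ c := star_mul_self_nonneg b
    have hcsa : IsSelfAdjoint c := .of_nonneg hc0
    have hz₀ : star b * x ∈ I n := (I n).mul_mem_left _ _ hxn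
    have hcz : ‖c - star b * x‖ < δ := by
      rw [hcdef, ← mul_sub]
      calc ‖star b * (b - x)‖ ≤ ‖star b‖ * ‖b - x‖ := norm_mul_le _ _
        _ = ‖b‖ * ‖b - x‖ := by rw [norm_star]
        _ < δ := by
            rw [dist_eq_norm] at hxd
            have h1 : ‖b‖ * ‖b - x‖ ≤ ‖b‖ * (δ / (‖b‖ + 1)) :=
              mul_le_mul_of_nonneg_left hxd.le (norm_nonneg b)
            have h2 : ‖b‖ * (δ / (‖b‖ + 1)) < δ := by
              rw [mul_div_assoc', div_lt_iff₀ (by positivity)]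
              nlinarith [norm_nonneg b]
            linarith
    set w₀ : D := (2⁻¹ : ℝ) • (star b * x + star (star b * x)) with hw₀def
    have hw₀I : w₀ ∈ I n := by
      rw [hw₀def, real_smul_eq_mul]
      exact (I n).mul_mem_left _ _ ((I n).add_mem hz₀ (star_mem_ideal (I n) (hclosed n) hz₀))
    have hw₀sa : IsSelfAdjoint w₀ := by
      show star w₀ = w₀
      rw [hw₀def, star_smul, star_trivial, star_add, star_star, add_comm]
    have hcw₀ : ‖c - w₀‖ < δ := by
      have hkey : c - w₀ = (2⁻¹ : ℝ) • ((c - star b * x) + star (c - star b * x)) := by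
        rw [star_sub, hcsa.star_eq, hw₀def]
        module
      calc ‖c - w₀‖ = ‖(2⁻¹ : ℝ)‖ * ‖(c - star b * x) + star (c - star b * x)‖ := by
            rw [hkey, norm_smul]
        _ ≤ 2⁻¹ * (‖c - star b * x‖ + ‖star (c - star b * x)‖) := by
            rw [Real.norm_eq_abs, abs_of_pos (by norm_num)]
            exact mul_le_mul_of_nonneg_left (norm_add_le _ _) (by norm_num)
        _ = ‖c - star b * x‖ := by rw [norm_star]; ring
        _ < δ := hcz
    set w : D := cfcₙ (fun t : ℝ => t ⊔ 0) w₀ with hwdef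
    have hwI : w ∈ I n := (cfcn_mem_of_mem (idealAlg (I n)) (isClosed_idealAlg _ (hclosed n))
      ⟨hw₀I, hw₀sa.star_eq.symm ▸ hw₀I⟩ hw₀sa _ (by fun_prop) (by simp)).1
    have hw0 : 0 ≤ w := cfcₙ_nonneg fun t _ => le_max_right t 0
    have hwsa : IsSelfAdjoint w := .of_nonneg hw0
    have hw₀w : w₀ ≤ w := by
      rw [← sub_nonneg]
      have hsub : w - w₀ = cfcₙ (fun t : ℝ => (t ⊔ 0) - t) w₀ := by
        rw [cfcₙ_sub (fun t : ℝ => t ⊔ 0) (fun t : ℝ => t) w₀ (by fun_prop) (by simp)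
          continuousOn_id rfl, cfcₙ_id' ℝ w₀ hw₀sa, hwdef]
      rw [hsub]
      exact cfcₙ_nonneg fun t _ => sub_nonneg.2 (le_max_left t 0)
    have hcw : c ≤ w + δ • 1 := by
      have h1 : c - w₀ ≤ ‖c - w₀‖ • (1 : D) := by
        have h := IsSelfAdjoint.le_algebraMap_norm_self (a := c - w₀) (hcsa.sub hw₀sa)
        rwa [Algebra.algebraMap_eq_smul_one] at h
      have h2 : (‖c - w₀‖ : ℝ) • (1 : D) ≤ δ • 1 := by
        rw [← sub_nonneg, ← sub_smul]
        exact smul_one_nonneg' (by linarith)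
      calc c = w₀ + (c - w₀) := by abel
        _ ≤ w + δ • 1 := add_le_add hw₀w (h1.trans h2)
    set f : ℝ → ℝ := fun t => (δ⁻¹ * (t - 2 * δ) ⊔ 0) ⊓ 1 with hfdef
    have hfc : Continuous f :=
      ((continuous_const.mul (continuous_id.sub continuous_const)).max continuous_const).min
        continuous_const
    have hf_mem : ∀ t, 0 ≤ f t ∧ f t ≤ 1 := fun t =>
      ⟨le_min (le_max_right _ _) one_pos.le, min_le_right _ _⟩
    have hf_eq0 : ∀ t ≤ 2 * δ, f t = 0 := by
      intro t ht
      have h1 : δ⁻¹ * (t - 2 * δ) ≤ 0 :=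
        mul_nonpos_of_nonneg_of_nonpos (by positivity) (by linarith)
      rw [hfdef]
      simp only
      rw [max_eq_right h1, min_eq_left zero_le_one]
    have hf0 : f 0 = 0 := hf_eq0 0 (by linarith)
    have hf_eq1 : ∀ t, 3 * δ ≤ t → f t = 1 := by
      intro t ht
      have h1t : (1 : ℝ) ≤ δ⁻¹ * (t - 2 * δ) := by
        rw [inv_mul_eq_div]
        exact (one_le_div hδ0).mpr (by linarith)
      rw [hfdef]
      simp only
      rw [min_eq_right (h1t.trans (le_max_left _ _))]
    set q := cfcₙ f c with hqdef
    have hqB : q ∈ B := cfcn_mem_of_mem (realAlg B) hB hcB hcsa f hfc.continuousOn hf0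
    have hq0 : 0 ≤ q := cfcₙ_nonneg fun t _ => (hf_mem t).1
    have hqsa : IsSelfAdjoint q := .of_nonneg hq0
    have hi : (2 * δ) • (q * q) ≤ q * c * q := by
      have e1 : cfcₙ (fun t => (2 * δ) * (f t * f t)) c = (2 * δ) • (q * q) := by
        rw [cfcₙ_const_mul (2 * δ) (fun t => f t * f t) c (by fun_prop) (by simp [hf0]),
          cfcₙ_mul f f c hfc.continuousOn hf0 hfc.continuousOn hf0]
      have e2 : cfcₙ (fun t => f t * t * f t) c = q * c * q := by
        rw [cfcₙ_mul (fun t => f t * t) f c (by fun_prop) (by simp [hf0]) hfc.continuousOn hf0,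
          cfcₙ_mul f (fun t : ℝ => t) c hfc.continuousOn hf0 continuousOn_id rfl,
          cfcₙ_id' ℝ c hcsa]
      rw [← e1, ← e2]
      refine cfcₙ_mono (fun t ht => ?_) (by fun_prop) (by fun_prop) (by simp [hf0]) (by simp [hf0])
      rcases le_or_gt t (2 * δ) with h | h
      · rw [hf_eq0 t h]; simp
      · have hft := (hf_mem t).1
        nlinarith
    have hii : q * c * q ≤ q * w * q + δ • (q * q) := by
      have h := star_left_conjugate_le_conjugate hcw q
      rw [hqsa.star_eq] at h
      calc q * c * q ≤ q * (w + δ • 1) * q := h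
        _ = q * w * q + δ • (q * q) := by
            rw [mul_add, add_mul, mul_smul_comm, smul_mul_assoc, mul_one]
    have hiii : δ • (q * q) ≤ q * w * q := by
      rw [← sub_nonneg]
      have h := sub_nonneg.mpr (hi.trans hii)
      have hrw : q * w * q + δ • (q * q) - (2 * δ) • (q * q) = q * w * q - δ • (q * q) := by
        module
      rwa [hrw] at h
    have hqwqI : q * w * q ∈ I n := (I n).mul_mem_right _ _ ((I n).mul_mem_left _ _ hwI)
    set Y := (δ⁻¹ : ℝ) • (q * w * q) with hYdef
    have hYI : Y ∈ I n := by
      rw [hYdef, real_smul_eq_mul]; exact (I n).mul_mem_left _ _ hqwqI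
    have hY0 : 0 ≤ Y := by
      refine real_smul_nonneg (by positivity) ?_
      have h := star_left_conjugate_nonneg hw0 q
      rwa [hqsa.star_eq] at h
    have hYsa : star Y = Y := (IsSelfAdjoint.of_nonneg hY0).star_eq
    have hqq : q * star q ≤ Y := by
      rw [hqsa.star_eq, hYdef]
      have h := real_smul_le_smul (r := δ⁻¹) (by positivity) hiii
      rwa [smul_smul, inv_mul_cancel₀ hδ0.ne', one_smul] at h
    have hqI : q ∈ I n := mem_of_conj_le (I n) (hclosed n) hYI hYsa hY0 hqq
    refine ⟨b * q, Set.mem_iUnion.mpr ⟨n, mul_mem hbB hqB, (I n).mul_mem_left _ _ hqI⟩, ?_⟩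
    have hfin : star (b - b * q) * (b - b * q)
        = cfcₙ (fun t => t - f t * t - t * f t + f t * (t * f t)) c := by
      have e1 : cfcₙ (fun t => f t * t) c = q * c := by
        rw [cfcₙ_mul f (fun t : ℝ => t) c hfc.continuousOn hf0 continuousOn_id rfl,
          cfcₙ_id' ℝ c hcsa]
      have e2 : cfcₙ (fun t => t * f t) c = c * q := by
        rw [cfcₙ_mul (fun t : ℝ => t) f c continuousOn_id rfl hfc.continuousOn hf0,
          cfcₙ_id' ℝ c hcsa]
      have e3 : cfcₙ (fun t => f t * (t * f t)) c = q * (c * q) := by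
        rw [cfcₙ_mul f (fun t => t * f t) c hfc.continuousOn hf0 (by fun_prop) (by simp [hf0]), e2]
      have e4 : cfcₙ (fun t => t - f t * t) c = c - q * c := by
        rw [cfcₙ_sub (fun t : ℝ => t) (fun t => f t * t) c continuousOn_id rfl (by fun_prop)
          (by simp [hf0]), cfcₙ_id' ℝ c hcsa, e1]
      have e5 : cfcₙ (fun t => t - f t * t - t * f t) c = c - q * c - c * q := by
        rw [cfcₙ_sub (fun t => t - f t * t) (fun t => t * f t) c (by fun_prop) (by simp [hf0])
          (by fun_prop) (by simp [hf0]), e4, e2]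
      have e6 : cfcₙ (fun t => t - f t * t - t * f t + f t * (t * f t)) c
          = c - q * c - c * q + q * (c * q) := by
        rw [cfcₙ_add (fun t => t - f t * t - t * f t) (fun t => f t * (t * f t)) c (by fun_prop)
          (by simp [hf0]) (by fun_prop) (by simp [hf0]), e5, e3]
      rw [e6, hcdef, star_sub, star_mul, hqsa.star_eq]
      noncomm_ring
    have hnorm : ‖cfcₙ (fun t => t - f t * t - t * f t + f t * (t * f t)) c‖ ≤ 3 * δ := by
      refine norm_cfcₙ_le fun t ht => ?_
      have ht0 : 0 ≤ t := quasispectrum_nonneg_of_nonneg c hc0 t ht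
      have hgt : t - f t * t - t * f t + f t * (t * f t) = t * (1 - f t) ^ 2 := by ring
      rcases le_or_gt t (3 * δ) with h | h
      · have hft := hf_mem t
        have h2 : (1 - f t) ^ 2 ≤ 1 := by nlinarith [hft.1, hft.2]
        have h3 : t * (1 - f t) ^ 2 ≤ t := by nlinarith [mul_le_mul_of_nonneg_left h2 ht0]
        rw [hgt, Real.norm_eq_abs, abs_of_nonneg (by positivity)]
        linarith
      · rw [hgt, hf_eq1 t h.le]
        simp [hδ0.le]
    rw [dist_eq_norm]
    have h5 : ‖b - b * q‖ * ‖b - b * q‖ ≤ 3 * δ := by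
      rw [← CStarRing.norm_star_mul_self, hfin]
      exact hnorm
    rw [hδdef] at h5
    nlinarith [norm_nonneg (b - b * q)]
  · refine closure_minimal (Set.iUnion_subset fun n x hx =>
      ⟨hx.1, subset_closure (Set.mem_iUnion.mpr ⟨n, hx.2⟩)⟩) (hB.inter isClosed_closure)
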